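/- For every LP^MLN program 𝔽 over 𝒫 and all interpretations Y ⊆ X ⊆ 𝒫, the following are equivalent: (a) ⟨Y, X⟩ is a soft HT model of 𝔽; (b) Y satisfies the reduct (𝔽̄_X)^X; (c) Y satisfies the reduct ({𝔽̄}^ch)^X. -/

import Mathlib

namespace LPMLN

/-- Propositional formulas over a set of atoms `P`, built from atoms and `⊥`
using `∧`, `∨`, `→`. -/
inductive Formula (P : Type) : Type where
  | atom : P → Formula P
  | bot  : Formula P
  | and  : Formula P → Formula P → Formula P
  | or   : Formula P → Formula P → Formula P
  | imp  : Formula P → Formula P → Formula P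
deriving DecidableEq

variable {P : Type} [DecidableEq P]

/-- `¬F` abbreviates `F → ⊥`. -/
def Formula.neg (F : Formula P) : Formula P := .imp F .bot

/-- Classical evaluation of a formula in an interpretation `X ⊆ P`. -/
def Formula.eval (X : Finset P) : Formula P → Bool
  | .atom p => decide (p ∈ X)
  | .bot => false
  | .and F G => F.eval X && G.eval X
  | .or F G => F.eval X || G.eval X
  | .imp F G => !(F.eval X) || G.eval X

/-- Classical satisfaction `X ⊨ F`. -/
def Formula.sat (X : Finset P) (F : Formula P) : Prop := F.eval X = true

/-- The reduct `F^X`: every maximal subformula not satisfied by `X` is replaced by `⊥`. -/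
def Formula.reduct (X : Finset P) : Formula P → Formula P
  | .atom p => if p ∈ X then .atom p else .bot
  | .bot => .bot
  | .and F G => if (Formula.and F G).eval X then .and (F.reduct X) (G.reduct X) else .bot
  | .or F G => if (Formula.or F G).eval X then .or (F.reduct X) (G.reduct X) else .bot
  | .imp F G => if (Formula.imp F G).eval X then .imp (F.reduct X) (G.reduct X) else .bot

/-- `X` satisfies a (finite) set of formulas. -/
def satSet (X : Finset P) (Γ : Finset (Formula P)) : Prop := ∀ F ∈ Γ, F.sat X

/-- The reduct `Γ^X` of a finite set of formulas. -/
def reductSet (X : Finset P) (Γ : Finset (Formula P)) : Finset (Formula P) :=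
  Γ.image (Formula.reduct X)

/-- `X` is a stable model of `Γ` if `X ⊨ Γ^X` and no proper subset of `X` satisfies `Γ^X`. -/
def StableModel (Γ : Finset (Formula P)) (X : Finset P) : Prop :=
  satSet X (reductSet X Γ) ∧ ∀ Y, Y ⊂ X → ¬ satSet Y (reductSet X Γ)

/-- A weight is a real number (soft) or the symbol `α` (hard). -/
inductive Weight : Type where
  | soft : ℝ → Weight
  | hard : Weight

noncomputable instance : DecidableEq Weight := Classical.decEq _

/-- An LP^MLN program: a finite set of weighted formulas `w : R`. -/
abbrev Program (P : Type) [DecidableEq P] := Finset (Weight × Formula P)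

/-- `𝔽_X`: the weighted formulas of `𝔽` whose formula is satisfied by `X`. -/
noncomputable def progSat (𝔽 : Program P) (X : Finset P) : Program P :=
  𝔽.filter (fun r => r.2.eval X = true)

/-- `𝔽̄`: the formulas of `𝔽`, with weights dropped. -/
noncomputable def formulas (𝔽 : Program P) : Finset (Formula P) := 𝔽.image Prod.snd

/-- `X` is a soft stable model of `𝔽` (i.e. `X ∈ SM[𝔽]`) if `X` is a stable model of `𝔽̄_X`. -/
def SoftStable (𝔽 : Program P) (X : Finset P) : Prop :=
  StableModel (formulas (progSat 𝔽 X)) X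

/-- w-expressions: either zero or a formal expression `e^{c₁ + c₂·α}` with `c₁ : ℝ`, `c₂ : ℤ`. -/
inductive WExpr : Type where
  | zero : WExpr
  | exp : ℝ → ℤ → WExpr

/-- Multiplication of w-expressions: add exponents componentwise; zero is absorbing. -/
def WExpr.mul : WExpr → WExpr → WExpr
  | .zero, _ => .zero
  | _, .zero => .zero
  | .exp a b, .exp c d => .exp (a + c) (b + d)

/-- Inverse of a w-expression: negate both exponents. -/
def WExpr.inv : WExpr → WExpr
  | .zero => .zero
  | .exp a b => .exp (-a) (-b)

/-- Evaluation of a w-expression at a real number `a`. -/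
noncomputable def WExpr.eval (a : ℝ) : WExpr → ℝ
  | .zero => 0
  | .exp c₁ c₂ => Real.exp (c₁ + c₂ * a)

/-- The real contribution of a weight (hard rules contribute `0` to the soft sum). -/
def softWeight : Weight → ℝ
  | .soft r => r
  | .hard => 0

/-- Sum of the weights of the soft rules of `𝔽`. -/
noncomputable def softSum (𝔽 : Program P) : ℝ := ∑ r ∈ 𝔽, softWeight r.1

/-- The number of hard rules of `𝔽`. -/
noncomputable def hardCount (𝔽 : Program P) : ℤ :=
  ((𝔽.filter (fun r => r.1 = Weight.hard)).card : ℤ)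

/-- `TW(𝔽) = e^{c₁ + c₂·α}` where `c₁` is the sum of the soft weights and
`c₂` the number of hard rules. -/
noncomputable def TW (𝔽 : Program P) : WExpr := .exp (softSum 𝔽) (hardCount 𝔽)

open Classical in
/-- `W_𝔽(X) = TW(𝔽_X)` if `X ∈ SM[𝔽]`, and zero otherwise. -/
noncomputable def W (𝔽 : Program P) (X : Finset P) : WExpr :=
  if SoftStable 𝔽 X then TW (progSat 𝔽 X) else .zero

open Classical in
/-- `W^pnt_𝔽(X) = TW(𝔽 \ 𝔽_X)⁻¹` if `X ∈ SM[𝔽]`, and zero otherwise. -/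
noncomputable def Wpnt (𝔽 : Program P) (X : Finset P) : WExpr :=
  if SoftStable 𝔽 X then (TW (𝔽 \ progSat 𝔽 X)).inv else .zero

/-- `P_𝔽(X)`: the limit as `a → ∞` of the normalized evaluation of `W_𝔽(X)`. -/
noncomputable def Pr [Fintype P] (𝔽 : Program P) (X : Finset P) : ℝ :=
  Filter.limUnder Filter.atTop
    (fun a : ℝ => (W 𝔽 X).eval a / ∑ Y : Finset P, (W 𝔽 Y).eval a)

/-- `P^pnt_𝔽(X)`: the limit as `a → ∞` of the normalized evaluation of `W^pnt_𝔽(X)`. -/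
noncomputable def PrPnt [Fintype P] (𝔽 : Program P) (X : Finset P) : ℝ :=
  Filter.limUnder Filter.atTop
    (fun a : ℝ => (Wpnt 𝔽 X).eval a / ∑ Y : Finset P, (Wpnt 𝔽 Y).eval a)

/-- Weak equivalence: the same probability distribution. -/
def WeakEquiv [Fintype P] (𝔽 𝔾 : Program P) : Prop :=
  ∀ X : Finset P, Pr 𝔽 X = Pr 𝔾 X

/-- Strong equivalence of LP^MLN programs. -/
def StrongEquiv [Fintype P] (𝔽 𝔾 : Program P) : Prop :=
  ∀ (ℍ : Program P) (X : Finset P), Pr (𝔽 ∪ ℍ) X = Pr (𝔾 ∪ ℍ) X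

/-- Structural equivalence of LP^MLN programs. -/
def StructEquiv (𝔽 𝔾 : Program P) : Prop :=
  ∀ (ℍ : Program P) (X : Finset P), SoftStable (𝔽 ∪ ℍ) X ↔ SoftStable (𝔾 ∪ ℍ) X

/-- HT satisfaction `⟨Y,X⟩ ⊨ₕₜ F` (at the world "here"). -/
def htSat (Y X : Finset P) : Formula P → Prop
  | .atom p => p ∈ Y
  | .bot => False
  | .and F G => htSat Y X F ∧ htSat Y X G
  | .or F G => htSat Y X F ∨ htSat Y X G
  | .imp F G => (htSat Y X F → htSat Y X G) ∧ (Formula.imp F G).sat X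

/-- `⟨Y,X⟩` is an HT model of a set `Γ` of formulas. -/
def HTModel (Γ : Finset (Formula P)) (Y X : Finset P) : Prop :=
  Y ⊆ X ∧ ∀ F ∈ Γ, htSat Y X F

/-- `⟨Y,X⟩` is a soft HT model of an LP^MLN program `𝔽`. -/
def SoftHT (𝔽 : Program P) (Y X : Finset P) : Prop :=
  Y ⊆ X ∧ ∀ r ∈ progSat 𝔽 X, htSat Y X r.2

/-- The choice formula `{F}^ch = F ∨ ¬F`. -/
def Formula.ch (F : Formula P) : Formula P := .or F F.neg

/-- `{Γ}^ch`, choice formulas of a set of formulas. -/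
def chSet (Γ : Finset (Formula P)) : Finset (Formula P) := Γ.image Formula.ch

/-- Renaming of atoms. -/
def Formula.rename {Q : Type} (f : P → Q) : Formula P → Formula Q
  | .atom p => .atom (f p)
  | .bot => .bot
  | .and F G => .and (F.rename f) (G.rename f)
  | .or F G => .or (F.rename f) (G.rename f)
  | .imp F G => .imp (F.rename f) (G.rename f)

/-- `Δ_{𝒫'}(F)`, a formula over `𝒫 ∪ 𝒫'`; unprimed atoms are `Sum.inl p`,
primed atoms `p'` are `Sum.inr p`. -/
def Formula.delta : Formula P → Formula (P ⊕ P)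
  | .atom p => .atom (Sum.inr p)
  | .bot => .bot
  | .and F G => .and F.delta G.delta
  | .or F G => .or F.delta G.delta
  | .imp F G => .and (.imp F.delta G.delta)
      (.imp (F.rename Sum.inl) (G.rename Sum.inl))

/-- `Δ_{𝒫'}(Γ)` for a set of formulas. -/
def deltaSet (Γ : Finset (Formula P)) : Finset (Formula (P ⊕ P)) :=
  Γ.image Formula.delta

/-- The interpretation `Y' ∪ X` of `𝒫 ∪ 𝒫'`. -/
def primedInterp (Y X : Finset P) : Finset (P ⊕ P) :=
  X.image Sum.inl ∪ Y.image Sum.inr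


lemma ht_imp_eval {Y X : Finset P} (hYX : Y ⊆ X) :
    ∀ F : Formula P, htSat Y X F → F.eval X = true := by
  intro F
  induction F with
  | atom p => intro h; simpa [Formula.eval] using hYX h
  | bot => intro h; exact h.elim
  | and F G ihF ihG =>
      intro h; simp [Formula.eval, ihF h.1, ihG h.2]
  | or F G ihF ihG =>
      intro h
      rcases h with h | h
      · simp [Formula.eval, ihF h]
      · simp [Formula.eval, ihG h]
  | imp F G ihF ihG => intro h; exact h.2

lemma reduct_of_false {X : Finset P} {F : Formula P} (h : F.eval X = false) :
    F.reduct X = Formula.bot := by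
  cases F with
  | atom p =>
      have : p ∉ X := by simpa [Formula.eval] using h
      simp [Formula.reduct, this]
  | bot => rfl
  | and F G => simp [Formula.reduct, h]
  | or F G => simp [Formula.reduct, h]
  | imp F G => simp [Formula.reduct, h]

lemma ht_iff_reduct {Y X : Finset P} (hYX : Y ⊆ X) :
    ∀ F : Formula P, htSat Y X F ↔ (F.reduct X).eval Y = true := by
  intro F
  induction F with
  | atom p =>
      by_cases hp : p ∈ X
      · simp [htSat, Formula.reduct, hp, Formula.eval]
      · have : p ∉ Y := fun hy => hp (hYX hy)
        simp [htSat, Formula.reduct, hp, Formula.eval, this]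
  | bot => simp [htSat, Formula.reduct, Formula.eval]
  | and F G ihF ihG =>
      by_cases h : (Formula.and F G).eval X = true
      · have hred : (Formula.and F G).reduct X = .and (F.reduct X) (G.reduct X) := by
          simp only [Formula.reduct]; rw [if_pos h]
        rw [hred]; simp [htSat, Formula.eval, ihF, ihG]
      · constructor
        · intro hht
          exact absurd (ht_imp_eval hYX _ hht) h
        · intro hh
          rw [reduct_of_false (by simpa using h)] at hh
          simp [Formula.eval] at hh
  | or F G ihF ihG =>
      by_cases h : (Formula.or F G).eval X = true
      · have hred : (Formula.or F G).reduct X = .or (F.reduct X) (G.reduct X) := by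
          simp only [Formula.reduct]; rw [if_pos h]
        rw [hred]; simp [htSat, Formula.eval, ihF, ihG]
      · constructor
        · intro hht
          exact absurd (ht_imp_eval hYX _ hht) h
        · intro hh
          rw [reduct_of_false (by simpa using h)] at hh
          simp [Formula.eval] at hh
  | imp F G ihF ihG =>
      by_cases h : (Formula.imp F G).eval X = true
      · have hred : (Formula.imp F G).reduct X = .imp (F.reduct X) (G.reduct X) := by
          simp only [Formula.reduct]; rw [if_pos h]
        rw [hred]
        constructor
        · rintro ⟨himp, -⟩
          simp only [Formula.eval, Bool.or_eq_true, Bool.not_eq_true']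
          by_cases hF : (F.reduct X).eval Y = true
          · right; exact ihG.mp (himp (ihF.mpr hF))
          · left; simpa using hF
        · intro hh
          refine ⟨fun hF => ?_, h⟩
          simp only [Formula.eval, Bool.or_eq_true, Bool.not_eq_true'] at hh
          rcases hh with hh | hh
          · rw [ihF.mp hF] at hh; cases hh
          · exact ihG.mpr hh
      · constructor
        · intro hht
          exact absurd hht.2 h
        · intro hh
          rw [reduct_of_false (by simpa using h)] at hh
          simp [Formula.eval] at hh

lemma ch_reduct_sat {Y X : Finset P} (F : Formula P) :
    (((F.ch).reduct X).eval Y = true) ↔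
      (F.eval X = true → (F.reduct X).eval Y = true) := by
  have hch : (F.ch).eval X = true := by
    cases hE : F.eval X <;> simp [Formula.ch, Formula.neg, Formula.eval, hE]
  have hred : (F.ch).reduct X = Formula.or (F.reduct X) ((F.neg).reduct X) := by
    show (Formula.or F F.neg).reduct X = _
    simp only [Formula.reduct]
    rw [if_pos (show Formula.eval X (Formula.or F F.neg) = true from hch)]
  by_cases hF : F.eval X = true
  · have hneg : (F.neg).eval X = false := by
      simp [Formula.neg, Formula.eval, hF]
    rw [hred, reduct_of_false hneg]
    simp [Formula.eval, hF]
  · have hF0 : F.eval X = false := by simpa using hF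
    have hneg : (F.neg).eval X = true := by
      simp [Formula.neg, Formula.eval, hF0]
    have hnr : (F.neg).reduct X = .imp (F.reduct X) (Formula.bot.reduct X) := by
      show (Formula.imp F .bot).reduct X = _
      simp only [Formula.reduct]
      rw [if_pos (show Formula.eval X (Formula.imp F .bot) = true from hneg)]
    rw [hred, hnr, reduct_of_false hF0]
    simp [Formula.eval, hF0, Formula.reduct]

/-- for `Y ⊆ X`, the following are equivalent: (a) `⟨Y,X⟩` is a soft HT model
of `𝔽`; (b) `Y ⊨ (𝔽̄_X)^X`; (c) `Y ⊨ ({𝔽̄}^ch)^X`. -/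
theorem stmt14 {P : Type} [DecidableEq P] (𝔽 : Program P) (Y X : Finset P) (hYX : Y ⊆ X) :
    (SoftHT 𝔽 Y X ↔ satSet Y (reductSet X (formulas (progSat 𝔽 X)))) ∧
    (satSet Y (reductSet X (formulas (progSat 𝔽 X))) ↔
      satSet Y (reductSet X (chSet (formulas 𝔽)))) := by
  have hb : satSet Y (reductSet X (formulas (progSat 𝔽 X))) ↔
      ∀ r ∈ 𝔽, r.2.eval X = true → (r.2.reduct X).eval Y = true := by
    constructor
    · intro hs r hr hre
      exact hs _ (Finset.mem_image.mpr ⟨r.2,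
        Finset.mem_image.mpr ⟨r, Finset.mem_filter.mpr ⟨hr, hre⟩, rfl⟩, rfl⟩)
    · intro hs F hF
      rcases Finset.mem_image.mp hF with ⟨G, hG, rfl⟩
      rcases Finset.mem_image.mp hG with ⟨r, hr, rfl⟩
      rcases Finset.mem_filter.mp hr with ⟨hr𝔽, hre⟩
      exact hs r hr𝔽 hre
  have hc : satSet Y (reductSet X (chSet (formulas 𝔽))) ↔
      ∀ r ∈ 𝔽, r.2.eval X = true → (r.2.reduct X).eval Y = true := by
    constructor
    · intro hs r hr hre
      have := hs _ (Finset.mem_image.mpr ⟨r.2.ch,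
        Finset.mem_image.mpr ⟨r.2, Finset.mem_image.mpr ⟨r, hr, rfl⟩, rfl⟩, rfl⟩)
      exact (ch_reduct_sat r.2).mp this hre
    · intro hs F hF
      rcases Finset.mem_image.mp hF with ⟨G, hG, rfl⟩
      rcases Finset.mem_image.mp hG with ⟨H, hH, rfl⟩
      rcases Finset.mem_image.mp hH with ⟨r, hr, rfl⟩
      exact (ch_reduct_sat r.2).mpr (hs r hr)
  constructor
  · rw [hb]
    constructor
    · intro ⟨_, hs⟩ r hr hre
      exact (ht_iff_reduct hYX r.2).mp (hs r (Finset.mem_filter.mpr ⟨hr, hre⟩))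
    · intro hs
      refine ⟨hYX, fun r hr => ?_⟩
      rcases Finset.mem_filter.mp hr with ⟨hr𝔽, hre⟩
      exact (ht_iff_reduct hYX r.2).mpr (hs r hr𝔽 hre)
  · rw [hb, hc]

end LPMLN
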